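/- arXiv:2011.05607 — 3 statements merged into one kernel-verified Lean document; each statement's English description precedes it below -/
import Mathlib

section
/- Let d ≥ 1 and let k be an integer with 1 ≤ k ≤ d. Then ρ_{d,k} = {x ∈ ℝ^d : for every subset I ⊆ {1,…,d} with |I| = k, ∑_{i∈I} |x_i| ≤ 1}. -/
open scoped Pointwise

noncomputable section

/-- The hypercube `γ_d = [-1,1]^d` in `ℝ^d`. -/
def hcube (d : ℕ) : Set (EuclideanSpace ℝ (Fin d)) := {x | ∀ i, |x i| ≤ 1}

/-- The cross-polytope `β_d = {x : ∑ |x_i| ≤ 1}` in `ℝ^d`. -/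
def cross (d : ℕ) : Set (EuclideanSpace ℝ (Fin d)) := {x | ∑ i, |x i| ≤ 1}

/-- The polytope `ρ_{d,k} = conv(β_d ∪ (1/k)γ_d)`. -/
def rho (d : ℕ) (k : ℝ) : Set (EuclideanSpace ℝ (Fin d)) :=
  convexHull ℝ (cross d ∪ (1 / k) • hcube d)

lemma abs_sub_sign_mul {t τ : ℝ} (h0 : 0 ≤ τ) (h : τ ≤ |t|) :
    |t - τ * Real.sign t| = |t| - τ := by
  rcases lt_trichotomy t 0 with ht | ht | ht
  · rw [Real.sign_of_neg ht, abs_of_neg ht] at *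
    rw [abs_of_nonpos (by linarith)]
    ring
  · subst ht
    have : τ = 0 := le_antisymm (by simpa using h) h0
    simp [this]
  · rw [Real.sign_of_pos ht, abs_of_pos ht] at *
    rw [mul_one, abs_of_nonneg (by linarith)]

lemma abs_real_sign_le_one (t : ℝ) : |Real.sign t| ≤ 1 := by
  rcases lt_trichotomy t 0 with ht | ht | ht
  · simp [Real.sign_of_neg ht]
  · simp [ht]
  · simp [Real.sign_of_pos ht]

/-- For integer `k` with `1 ≤ k ≤ d`, `ρ_{d,k}` is the set of points `x ∈ ℝ^d` such that the
absolute values of any `k` coordinates of `x` sum to at most `1`. -/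
theorem rho_eq_inter_halfspaces (d k : ℕ) (hd : 1 ≤ d) (hk1 : 1 ≤ k) (hkd : k ≤ d) :
    rho d (k : ℝ) = {x : EuclideanSpace ℝ (Fin d) |
      ∀ I : Finset (Fin d), I.card = k → ∑ i ∈ I, |x i| ≤ 1} := by
  have hk0 : (0:ℝ) < (k:ℝ) := by exact_mod_cast hk1
  apply Set.Subset.antisymm
  · -- easy direction
    apply convexHull_min
    · rintro x (hx | hx)
      · intro I hI
        calc ∑ i ∈ I, |x i| ≤ ∑ i, |x i| :=
              Finset.sum_le_sum_of_subset_of_nonneg (Finset.subset_univ I)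
                (fun i _ _ => abs_nonneg _)
          _ ≤ 1 := hx
      · obtain ⟨y, hy, rfl⟩ := hx
        intro I hI
        have hyi : ∀ i, |((1/(k:ℝ)) • y) i| ≤ 1/(k:ℝ) := by
          intro i
          have h1 : ((1/(k:ℝ)) • y) i = (1/(k:ℝ)) * y i := rfl
          rw [h1, abs_mul, abs_of_nonneg (by positivity : (0:ℝ) ≤ 1/(k:ℝ))]
          calc (1/(k:ℝ)) * |y i| ≤ (1/(k:ℝ)) * 1 :=
                mul_le_mul_of_nonneg_left (hy i) (by positivity)
            _ = 1/(k:ℝ) := mul_one _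
        calc ∑ i ∈ I, |((1/(k:ℝ)) • y) i| ≤ ∑ _i ∈ I, 1/(k:ℝ) :=
              Finset.sum_le_sum fun i _ => hyi i
          _ = (I.card : ℝ) * (1/(k:ℝ)) := by rw [Finset.sum_const, nsmul_eq_mul]
          _ = 1 := by rw [hI]; field_simp
    · intro x hx y hy a b ha hb hab
      intro I hI
      have key : ∀ i, |(a • x + b • y) i| ≤ a * |x i| + b * |y i| := by
        intro i
        have h1 : (a • x + b • y) i = a * x i + b * y i := rfl
        rw [h1]
        calc |a * x i + b * y i| ≤ |a * x i| + |b * y i| := abs_add_le _ _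
          _ = a * |x i| + b * |y i| := by
              rw [abs_mul, abs_mul, abs_of_nonneg ha, abs_of_nonneg hb]
      calc ∑ i ∈ I, |(a • x + b • y) i| ≤ ∑ i ∈ I, (a * |x i| + b * |y i|) :=
            Finset.sum_le_sum fun i _ => key i
        _ = a * ∑ i ∈ I, |x i| + b * ∑ i ∈ I, |y i| := by
            rw [Finset.sum_add_distrib, Finset.mul_sum, Finset.mul_sum]
        _ ≤ a * 1 + b * 1 :=
            add_le_add (mul_le_mul_of_nonneg_left (hx I hI) ha)
              (mul_le_mul_of_nonneg_left (hy I hI) hb)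
        _ = 1 := by linarith
  · -- hard direction
    intro x hx
    simp only [Set.mem_setOf_eq] at hx
    -- choose a maximizing k-subset I
    have hne : (Finset.powersetCard k (Finset.univ : Finset (Fin d))).Nonempty := by
      obtain ⟨t, ht, htc⟩ := Finset.exists_subset_card_eq
        (show k ≤ (Finset.univ : Finset (Fin d)).card by simpa using hkd)
      exact ⟨t, Finset.mem_powersetCard.2 ⟨ht, htc⟩⟩
    obtain ⟨I, hImem, hImax⟩ := Finset.exists_max_image
      (Finset.powersetCard k (Finset.univ : Finset (Fin d)))
      (fun J => ∑ i ∈ J, |x i|) hne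
    have hI : I.card = k := (Finset.mem_powersetCard.1 hImem).2
    have hmax : ∀ J : Finset (Fin d), J.card = k →
        ∑ i ∈ J, |x i| ≤ ∑ i ∈ I, |x i| := fun J hJ =>
      hImax J (Finset.mem_powersetCard.2 ⟨Finset.subset_univ _, hJ⟩)
    have hIne : I.Nonempty := Finset.card_pos.1 (by omega)
    obtain ⟨i₀, hi₀, hmin⟩ := Finset.exists_min_image I (fun i => |x i|) hIne
    set τ := |x i₀| with hτdef
    have hτ0 : 0 ≤ τ := abs_nonneg _
    have hτle : ∀ i ∈ I, τ ≤ |x i| := hmin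
    have houtside : ∀ j, j ∉ I → |x j| ≤ τ := by
      intro j hj
      by_contra hlt
      push_neg at hlt
      have hjE : j ∉ I.erase i₀ := fun h => hj (Finset.mem_of_mem_erase h)
      have hJcard : (insert j (I.erase i₀)).card = k := by
        rw [Finset.card_insert_of_notMem hjE, Finset.card_erase_of_mem hi₀, hI]
        omega
      have h1 : ∑ i ∈ insert j (I.erase i₀), |x i| = |x j| + ∑ i ∈ I.erase i₀, |x i| :=
        Finset.sum_insert hjE
      have h2 : |x i₀| + ∑ i ∈ I.erase i₀, |x i| = ∑ i ∈ I, |x i| :=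
        Finset.add_sum_erase I (fun i => |x i|) hi₀
      have := hmax _ hJcard
      linarith
    set lam := ∑ i ∈ I, (|x i| - τ) with hlam
    have hlam0 : 0 ≤ lam := Finset.sum_nonneg fun i hi => sub_nonneg.2 (hτle i hi)
    have hkey : lam + (k:ℝ) * τ = ∑ i ∈ I, |x i| := by
      rw [hlam, Finset.sum_sub_distrib, Finset.sum_const, hI, nsmul_eq_mul]
      ring
    have hsum1 : ∑ i ∈ I, |x i| ≤ 1 := hx I hI
    have hlam1 : lam + (k:ℝ) * τ ≤ 1 := by rw [hkey]; exact hsum1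
    have hkτ0 : 0 ≤ (k:ℝ) * τ := mul_nonneg hk0.le hτ0
    have hlamle1 : lam ≤ 1 := by linarith
    set u : EuclideanSpace ℝ (Fin d) :=
      WithLp.toLp 2 (fun i => if i ∈ I then x i - τ * Real.sign (x i) else 0) with hu
    set v : EuclideanSpace ℝ (Fin d) :=
      WithLp.toLp 2 (fun i => if i ∈ I then τ * Real.sign (x i) else x i) with hv
    have hxuv : x = u + v := by
      ext i
      show x i = u i + v i
      rw [hu, hv]
      by_cases h : i ∈ I <;> simp [h]
    have habsu : ∀ i ∈ I, |u i| = |x i| - τ := by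
      intro i hi
      rw [hu]
      simp only [PiLp.toLp_apply, if_pos hi]
      exact abs_sub_sign_mul hτ0 (hτle i hi)
    have hsumu : ∑ i, |u i| = lam := by
      rw [hlam, ← Finset.sum_subset (Finset.subset_univ I)
        (fun i _ hi => by rw [hu]; simp [if_neg hi])]
      exact Finset.sum_congr rfl habsu
    have habsv : ∀ i, |v i| ≤ τ := by
      intro i
      rw [hv]
      by_cases h : i ∈ I
      · simp only [PiLp.toLp_apply, if_pos h]
        calc |τ * Real.sign (x i)| = τ * |Real.sign (x i)| := by
              rw [abs_mul, abs_of_nonneg hτ0]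
          _ ≤ τ * 1 := mul_le_mul_of_nonneg_left (abs_real_sign_le_one _) hτ0
          _ = τ := mul_one _
      · simp only [PiLp.toLp_apply, if_neg h]
        exact houtside i h
    rcases eq_or_lt_of_le hlam0 with h0 | h0
    · -- lam = 0 : x ∈ (1/k) • hcube
      have hxi : ∀ i, |x i| ≤ τ := by
        intro i
        by_cases h : i ∈ I
        · have : |x i| - τ ≤ lam :=
            Finset.single_le_sum (f := fun i => |x i| - τ)
              (fun j hj => sub_nonneg.2 (hτle j hj)) h
          linarith [h0.symm ▸ this]
        · exact houtside i h
      have hτk : τ ≤ 1/(k:ℝ) := by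
        rw [le_div_iff₀ hk0]
        nlinarith
      have hmem : (k:ℝ) • x ∈ hcube d := by
        intro i
        have h1 : ((k:ℝ) • x) i = (k:ℝ) * x i := rfl
        rw [h1, abs_mul, abs_of_nonneg hk0.le]
        calc (k:ℝ) * |x i| ≤ (k:ℝ) * (1/(k:ℝ)) :=
              mul_le_mul_of_nonneg_left (le_trans (hxi i) hτk) hk0.le
          _ = 1 := by field_simp
      have heq : (1/(k:ℝ)) • ((k:ℝ) • x) = x := by
        rw [smul_smul, one_div, inv_mul_cancel₀ (ne_of_gt hk0), one_smul]
      exact subset_convexHull ℝ _ (Or.inr (heq ▸ Set.smul_mem_smul_set hmem))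
    · rcases eq_or_lt_of_le hlamle1 with h1 | h1
      · -- lam = 1 : x ∈ cross
        have hτz : τ = 0 := by nlinarith
        have hzero : ∀ i ∈ (Finset.univ : Finset (Fin d)), i ∉ I → |x i| = 0 := by
          intro i _ hi
          have h2 := houtside i hi
          rw [hτz] at h2
          exact le_antisymm h2 (abs_nonneg _)
        have : ∑ i, |x i| ≤ 1 := by
          rw [← Finset.sum_subset (Finset.subset_univ I) hzero]
          exact hsum1
        exact subset_convexHull ℝ _ (Or.inl this)
      · -- 0 < lam < 1
        have hlamne : lam ≠ 0 := ne_of_gt h0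
        have h1l : (0:ℝ) < 1 - lam := by linarith
        set a : EuclideanSpace ℝ (Fin d) := lam⁻¹ • u with ha
        set b : EuclideanSpace ℝ (Fin d) := (1 - lam)⁻¹ • v with hb
        have hacross : a ∈ cross d := by
          show ∑ i, |a i| ≤ 1
          have : ∀ i, |a i| = lam⁻¹ * |u i| := by
            intro i
            have h2 : a i = lam⁻¹ * u i := rfl
            rw [h2, abs_mul, abs_of_nonneg (inv_nonneg.2 hlam0)]
          rw [Finset.sum_congr rfl (fun i _ => this i), ← Finset.mul_sum, hsumu,
            inv_mul_cancel₀ hlamne]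
        have hbmem : b ∈ (1/(k:ℝ)) • hcube d := by
          have hy : (k:ℝ) • b ∈ hcube d := by
            intro i
            have h2 : ((k:ℝ) • b) i = (k:ℝ) * ((1-lam)⁻¹ * v i) := rfl
            rw [h2, abs_mul, abs_mul, abs_of_nonneg hk0.le,
              abs_of_nonneg (inv_nonneg.2 h1l.le)]
            have h3 : (k:ℝ) * ((1-lam)⁻¹ * |v i|) ≤ (k:ℝ) * ((1-lam)⁻¹ * τ) := by
              apply mul_le_mul_of_nonneg_left _ hk0.le
              exact mul_le_mul_of_nonneg_left (habsv i) (inv_nonneg.2 h1l.le)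
            refine le_trans h3 ?_
            rw [← mul_assoc, mul_comm (k:ℝ) _, mul_assoc]
            rw [inv_mul_le_iff₀ h1l]
            nlinarith
          have heq : (1/(k:ℝ)) • ((k:ℝ) • b) = b := by
            rw [smul_smul, one_div, inv_mul_cancel₀ (ne_of_gt hk0), one_smul]
          exact heq ▸ Set.smul_mem_smul_set hy
        have hcombo : lam • a + (1 - lam) • b = x := by
          rw [hxuv]
          congr 1
          · rw [ha, smul_smul, mul_inv_cancel₀ hlamne, one_smul]
          · rw [hb, smul_smul, mul_inv_cancel₀ (ne_of_gt h1l), one_smul]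
        rw [← hcombo]
        have hmem1 : a ∈ cross d ∪ (1/(k:ℝ)) • hcube d := Or.inl hacross
        have hmem2 : b ∈ cross d ∪ (1/(k:ℝ)) • hcube d := Or.inr hbmem
        exact (convex_convexHull ℝ (cross d ∪ (1/(k:ℝ)) • hcube d))
          (subset_convexHull ℝ _ hmem1) (subset_convexHull ℝ _ hmem2)
          hlam0 h1l.le (by ring)
end
end

section
/- Let d ≥ 1, let l and i be integers with 0 ≤ i < l ≤ d, and let k be a real number with l ≤ k ≤ d. In ℝ^d, let G = {x ∈ [−1,1]^d : x_1 = ⋯ = x_l = 1}, and let A be the affine span of G ∪ {k e_1, …, k e_i}. Then the Euclidean distance from the point k e_{i+1} to A equals k · √((k² − 2(i+1)k + (i+1)l) / (k² − 2ik + il)). -/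
noncomputable section

open scoped RealInnerProductSpace

lemma sum_regions (d l i : ℕ) (hil : i < l) (hld : l ≤ d) (A B C : ℝ) :
    ∑ m ∈ Finset.range d, (if m < i then A else if m = i then B else if m < l then C else 0)
      = i * A + B + ((l - (i + 1) : ℕ) : ℝ) * C := by
  rw [Finset.range_eq_Ico, ← Finset.sum_Ico_consecutive _ (Nat.zero_le l) hld,
    ← Finset.sum_Ico_consecutive _ (Nat.zero_le i) hil.le,
    ← Finset.insert_Ico_add_one_left_eq_Ico hil, Finset.sum_insert (by simp)]
  have h1 : ∑ m ∈ Finset.Ico 0 i, (if m < i then A else if m = i then B else if m < l then C else 0) = i * A := by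
    rw [Finset.sum_congr rfl (fun m hm => by
      rw [if_pos (Finset.mem_Ico.mp hm).2]), Finset.sum_const, Nat.card_Ico]
    simp [mul_comm]
  have h2 : ∑ m ∈ Finset.Ico (i + 1) l, (if m < i then A else if m = i then B else if m < l then C else 0) = ((l - (i + 1) : ℕ) : ℝ) * C := by
    rw [Finset.sum_congr rfl (fun m hm => by
      have h := Finset.mem_Ico.mp hm
      rw [if_neg (by omega), if_neg (by omega), if_pos h.2]), Finset.sum_const, Nat.card_Ico]
    simp [mul_comm]
  have h3 : ∑ m ∈ Finset.Ico l d, (if m < i then A else if m = i then B else if m < l then C else 0) = 0 := by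
    rw [Finset.sum_congr rfl (fun m hm => by
      have := (Finset.mem_Ico.mp hm).1
      rw [if_neg (by omega), if_neg (by omega), if_neg (by omega)])]
    simp
  rw [h1, h2, h3, if_neg (lt_irrefl i), if_pos rfl]
  ring

lemma infDist_affineSpan_eq {n : ℕ} (S : Set (EuclideanSpace ℝ (Fin n)))
    (q y u : EuclideanSpace ℝ (Fin n))
    (hy : y ∈ affineSpan ℝ S) (hqu : q - y = u)
    (horth : ∀ a ∈ S, ∀ b ∈ S, ⟪u, a - b⟫ = 0) :
    Metric.infDist q (affineSpan ℝ S : Set (EuclideanSpace ℝ (Fin n))) = ‖u‖ := by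
  have hdir : ∀ w ∈ vectorSpan ℝ S, ⟪u, w⟫ = 0 := by
    intro w hw
    rw [vectorSpan_def] at hw
    induction hw using Submodule.span_induction with
    | mem x hx =>
      obtain ⟨a, ha, b, hb, rfl⟩ := hx
      exact horth a ha b hb
    | zero => simp
    | add x y _ _ hx hy => rw [inner_add_right, hx, hy]; ring
    | smul c x _ hx => rw [inner_smul_right, hx]; ring
  apply le_antisymm
  · calc Metric.infDist q (affineSpan ℝ S : Set (EuclideanSpace ℝ (Fin n)))
        ≤ dist q y := Metric.infDist_le_dist_of_mem hy
      _ = ‖u‖ := by rw [dist_eq_norm, hqu]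
  · by_contra h
    push_neg at h
    rw [Metric.infDist_lt_iff ⟨y, hy⟩] at h
    obtain ⟨z, hz, hlt⟩ := h
    have hzy : ⟪u, y - z⟫ = 0 := by
      apply hdir
      rw [← direction_affineSpan]
      simpa using AffineSubspace.vsub_mem_direction hy hz
    have hle : ‖u‖ ≤ dist q z := by
      have hqz : q - z = u + (y - z) := by rw [← hqu]; abel
      rw [dist_eq_norm, hqz]
      have h2 : ‖u + (y - z)‖ ^ 2 = ‖u‖ ^ 2 + ‖y - z‖ ^ 2 := by
        rw [norm_add_sq_real, hzy]; ring
      nlinarith [norm_nonneg (u + (y - z)), norm_nonneg u, norm_nonneg (y - z)]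
    linarith

/-- The distance between the pulled point `k e_{i+1}` and the affine span of the union of the
face `G = {x ∈ [-1,1]^d : x_1 = ⋯ = x_l = 1}` of the hypercube with the `i` pulled points
`k e_1, …, k e_i` equals `k √((k² - 2(i+1)k + (i+1)l) / (k² - 2ik + il))`. -/
theorem dist_pulled_point_affineSpan (d l i : ℕ) (hd : 1 ≤ d) (hil : i < l) (hld : l ≤ d)
    (k : ℝ) (hlk : (l : ℝ) ≤ k) (hkd : k ≤ d) :
    Metric.infDist
      (k • EuclideanSpace.single (⟨i, lt_of_lt_of_le hil hld⟩ : Fin d) (1 : ℝ))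
      (affineSpan ℝ
        ({x : EuclideanSpace ℝ (Fin d) |
            (∀ j, |x j| ≤ 1) ∧ ∀ j : Fin d, (j : ℕ) < l → x j = 1} ∪
          {p : EuclideanSpace ℝ (Fin d) |
            ∃ j : Fin d, (j : ℕ) < i ∧ p = k • EuclideanSpace.single j (1 : ℝ)}) :
        Set (EuclideanSpace ℝ (Fin d))) =
      k * Real.sqrt
        ((k ^ 2 - 2 * ((i : ℝ) + 1) * k + ((i : ℝ) + 1) * (l : ℝ)) /
          (k ^ 2 - 2 * (i : ℝ) * k + (i : ℝ) * (l : ℝ))) := by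
  have hid : i < d := lt_of_lt_of_le hil hld
  have hilR : (i : ℝ) + 1 ≤ (l : ℝ) := by exact_mod_cast hil
  have hiR : (0 : ℝ) ≤ (i : ℝ) := Nat.cast_nonneg i
  have hk1 : (1 : ℝ) ≤ k := le_trans (by exact_mod_cast Nat.one_le_iff_ne_zero.mpr (by omega)) hlk
  set D : ℝ := k ^ 2 - 2 * (i : ℝ) * k + (i : ℝ) * (l : ℝ) with hD
  have hDpos : 0 < D := by nlinarith [sq_nonneg (k - (i : ℝ) - 1)]
  set s : ℝ := ((l : ℝ) - 2 * k) / D with hs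
  set A : ℝ := -1 - s * (k - (i : ℝ)) with hA
  set B : ℝ := k - 1 + s * (i : ℝ) with hB
  set C : ℝ := -1 + s * (i : ℝ) with hC
  set I : Fin d := ⟨i, hid⟩ with hI
  set u : EuclideanSpace ℝ (Fin d) := WithLp.toLp 2 fun m =>
    if (m : ℕ) < i then A else if (m : ℕ) = i then B else if (m : ℕ) < l then C else 0 with hu
  set y : EuclideanSpace ℝ (Fin d) := WithLp.toLp 2 fun m =>
    if (m : ℕ) < i then 1 + s * (k - (i : ℝ)) else if (m : ℕ) < l then 1 - s * (i : ℝ) else 0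
    with hy
  set c : EuclideanSpace ℝ (Fin d) := WithLp.toLp 2 fun m => if (m : ℕ) < l then 1 else 0 with hc
  set M := ({x : EuclideanSpace ℝ (Fin d) |
            (∀ j, |x j| ≤ 1) ∧ ∀ j : Fin d, (j : ℕ) < l → x j = 1} ∪
          {p : EuclideanSpace ℝ (Fin d) |
            ∃ j : Fin d, (j : ℕ) < i ∧ p = k • EuclideanSpace.single j (1 : ℝ)}) with hM
  set q : EuclideanSpace ℝ (Fin d) := k • EuclideanSpace.single I (1 : ℝ) with hq
  -- membership of c
  have hcM : c ∈ M := by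
    left
    refine ⟨fun j => ?_, fun j hj => if_pos hj⟩
    by_cases h : (j : ℕ) < l <;> simp [hc, h]
  -- q - y = u
  have hqu : q - y = u := by
    ext m
    have hqm : q m = if m = I then k else 0 := by
      simp [hq, EuclideanSpace.single_apply, mul_ite]
    have hsub : (q - y) m = q m - y m := rfl
    rw [hsub, hqm]
    have hmI : (m = I) ↔ ((m : ℕ) = i) := by
      constructor
      · rintro rfl; rfl
      · intro h; exact Fin.ext h
    rcases lt_trichotomy (m : ℕ) i with h | h | h
    · rw [if_neg (by omega ∘ hmI.mp), hy, hu]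
      simp only [if_pos h]
      rw [hA]; ring
    · rw [if_pos (hmI.mpr h), hy, hu]
      simp only [if_neg (by omega : ¬ (m : ℕ) < i), if_pos h,
        if_pos (by omega : (m : ℕ) < l)]
      rw [hB]; ring
    · by_cases hl : (m : ℕ) < l
      · rw [if_neg (fun he => by omega ∘ hmI.mp <| he), hy, hu]
        simp only [if_neg (by omega : ¬ (m : ℕ) < i), if_neg (by omega : ¬ (m : ℕ) = i),
          if_pos hl]
        rw [hC]; ring
      · rw [if_neg (fun he => by omega ∘ hmI.mp <| he), hy, hu]
        simp only [if_neg (by omega : ¬ (m : ℕ) < i), if_neg (by omega : ¬ (m : ℕ) = i),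
          if_neg hl]
        ring
  -- sum apply helper
  have euclid_sum_apply : ∀ (F : Finset (Fin d)) (f : Fin d → EuclideanSpace ℝ (Fin d))
      (m : Fin d), (∑ j ∈ F, f j) m = ∑ j ∈ F, f j m := by
    intro F f m
    induction F using Finset.cons_induction with
    | empty => rfl
    | cons a F ha ih => rw [Finset.sum_cons, Finset.sum_cons, ← ih]; rfl
  set F : Finset (Fin d) := Finset.univ.filter (fun j : Fin d => (j : ℕ) < i) with hF
  have hFmem : ∀ m : Fin d, m ∈ F ↔ (m : ℕ) < i := by
    intro m; simp [hF]
  have hFcard : F.card = i := by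
    have : F = Finset.Iio I := by
      ext m; simp [hF, Finset.mem_Iio, Fin.lt_def, hI]
    rw [this, Fin.card_Iio]
  -- y - c = s • ∑ (p_j - c)
  have hwdir : y - c = s • ∑ j ∈ F, ((k • EuclideanSpace.single j (1 : ℝ)) - c) := by
    ext m
    have h1 : (s • ∑ j ∈ F, ((k • EuclideanSpace.single j (1 : ℝ)) - c)) m
        = s * ((∑ j ∈ F, ((k • EuclideanSpace.single j (1 : ℝ)) - c)) m) := rfl
    have h2 : (∑ j ∈ F, ((k • EuclideanSpace.single j (1 : ℝ)) - c)) m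
        = ∑ j ∈ F, (k * (if m = j then 1 else 0) - c m) := by
      rw [euclid_sum_apply]
      exact Finset.sum_congr rfl fun j _ => by
        have : ((k • EuclideanSpace.single j (1 : ℝ)) - c) m
            = k * (EuclideanSpace.single j (1 : ℝ) m) - c m := rfl
        rw [this, EuclideanSpace.single_apply]
    have h3 : ∑ j ∈ F, (k * (if m = j then 1 else 0) - c m)
        = (if m ∈ F then k else 0) - (i : ℝ) * c m := by
      rw [Finset.sum_sub_distrib, Finset.sum_const, hFcard]
      simp only [mul_ite, mul_one, mul_zero]
      rw [Finset.sum_ite_eq F m (fun _ => k), nsmul_eq_mul]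
    have h4 : (y - c) m = y m - c m := rfl
    rw [h4, h1, h2, h3]
    simp only [hy, hc]
    by_cases hmi : (m : ℕ) < i
    · rw [if_pos hmi, if_pos (by omega : (m : ℕ) < l), if_pos ((hFmem m).mpr hmi)]
      ring
    · rw [if_neg hmi, if_neg ((hFmem m).not.mpr hmi)]
      by_cases hml : (m : ℕ) < l
      · rw [if_pos hml, if_pos hml]; ring
      · rw [if_neg hml, if_neg hml]; ring
  have hcS : c ∈ affineSpan ℝ M := subset_affineSpan ℝ M hcM
  have hyM : y ∈ affineSpan ℝ M := by
    have hdirmem : y - c ∈ (affineSpan ℝ M).direction := by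
      rw [hwdir]
      refine Submodule.smul_mem _ _ (Submodule.sum_mem _ fun j hj => ?_)
      have hjM : (k • EuclideanSpace.single j (1 : ℝ)) ∈ M :=
        Or.inr ⟨j, (hFmem j).mp hj, rfl⟩
      exact AffineSubspace.vsub_mem_direction (subset_affineSpan ℝ M hjM) hcS
    have := AffineSubspace.vadd_mem_of_mem_direction hdirmem hcS
    simpa [vadd_eq_add, sub_add_cancel] using this
  have hD0 : k ^ 2 - 2 * (i : ℝ) * k + (i : ℝ) * (l : ℝ) ≠ 0 := by
    rw [← hD]; exact ne_of_gt hDpos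
  have hcast : ((l - (i + 1) : ℕ) : ℝ) = (l : ℝ) - (i : ℝ) - 1 := by
    have h : i + 1 ≤ l := hil
    push_cast [Nat.cast_sub h]
    ring
  -- inner products with members of M are constant
  have hval : ∀ a ∈ M, ⟪u, a⟫ = (i : ℝ) * A + B + ((l - (i + 1) : ℕ) : ℝ) * C := by
    intro a ha
    have hinner : ⟪u, a⟫ = ∑ m : Fin d, u m * a m := by
      simp [PiLp.inner_apply, RCLike.inner_apply, conj_trivial, mul_comm]
    rcases ha with hG | ⟨j, hj, rfl⟩
    · have hterm : ∀ m : Fin d, u m * a m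
          = (if (m : ℕ) < i then A else if (m : ℕ) = i then B else if (m : ℕ) < l then C else 0) := by
        intro m
        by_cases hml : (m : ℕ) < l
        · rw [hG.2 m hml, mul_one]
        · have hum : u m = 0 := by
            simp only [hu]
            rw [if_neg (by omega), if_neg (by omega), if_neg hml]
          rw [hum, zero_mul, if_neg (by omega), if_neg (by omega), if_neg hml]
      rw [hinner, Finset.sum_congr rfl (fun m _ => hterm m),
        Fin.sum_univ_eq_sum_range
          (fun m => if m < i then A else if m = i then B else if m < l then C else 0) d,
        sum_regions d l i hil hld A B C]
    · rw [hinner]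
      have hterm : ∀ m : Fin d,
          u m * ((k • EuclideanSpace.single j (1 : ℝ)) m) = if m = j then u m * k else 0 := by
        intro m
        have : (k • EuclideanSpace.single j (1 : ℝ)) m
            = k * (EuclideanSpace.single j (1 : ℝ) m) := rfl
        rw [this, EuclideanSpace.single_apply]
        split_ifs <;> ring
      rw [Finset.sum_congr rfl (fun m _ => hterm m),
        Finset.sum_ite_eq' Finset.univ j (fun m => u m * k), if_pos (Finset.mem_univ j)]
      have huj : u j = A := by
        simp only [hu]
        rw [if_pos hj]
      rw [huj, hcast, hA, hB, hC, hs, hD]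
      field_simp [show k * (k - 2 * (i : ℝ)) + (l : ℝ) * (i : ℝ) ≠ 0 by convert hD0 using 1; ring]
      ring
  have horth : ∀ a ∈ M, ∀ b ∈ M, ⟪u, a - b⟫ = 0 := by
    intro a ha b hb
    rw [inner_sub_right, hval a ha, hval b hb, sub_self]
  rw [infDist_affineSpan_eq M q y u hyM hqu horth]
  -- compute the norm
  have hk0 : (0 : ℝ) ≤ k := le_trans zero_le_one hk1
  have hterm2 : ∀ m : Fin d, ‖u m‖ ^ 2
      = (if (m : ℕ) < i then A ^ 2 else if (m : ℕ) = i then B ^ 2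
          else if (m : ℕ) < l then C ^ 2 else 0) := by
    intro m
    simp only [hu, Real.norm_eq_abs, sq_abs]
    split_ifs <;> ring
  rw [EuclideanSpace.norm_eq, Finset.sum_congr rfl (fun m _ => hterm2 m),
    Fin.sum_univ_eq_sum_range
      (fun m => if m < i then A ^ 2 else if m = i then B ^ 2 else if m < l then C ^ 2 else 0) d,
    sum_regions d l i hil hld (A ^ 2) (B ^ 2) (C ^ 2)]
  have hmul : k * Real.sqrt ((k ^ 2 - 2 * ((i : ℝ) + 1) * k + ((i : ℝ) + 1) * (l : ℝ)) / D)
      = Real.sqrt (k ^ 2 * ((k ^ 2 - 2 * ((i : ℝ) + 1) * k + ((i : ℝ) + 1) * (l : ℝ)) / D)) := by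
    rw [Real.sqrt_mul (sq_nonneg k), Real.sqrt_sq hk0]
  rw [hmul]
  congr 1
  rw [hcast, hA, hB, hC, hs, hD]
  field_simp [show k * (k - (i : ℝ) * 2) + (i : ℝ) * (l : ℝ) ≠ 0 by convert hD0 using 1; ring]
  ring
end
end

section
/- For every integer d ≥ 1 and every real k with 1 ≤ k ≤ d, the d-dimensional Lebesgue measure of ρ*_{d,k} = (k β_d) ∩ γ_d equals 2^d · ∑_{i=0}^{⌊k⌋} (−1)^i (k − i)^d / (i!(d−i)!). -/
open MeasureTheory
open scoped Pointwise

noncomputable section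

/-- The polytope `ρ*_{d,k} = (k β_d) ∩ γ_d`. -/
def rhoStar (d : ℕ) (k : ℝ) : Set (EuclideanSpace ℝ (Fin d)) := (k • cross d) ∩ hcube d

open intervalIntegral
open scoped ENNReal


lemma hasDerivAt_maxpow (n : ℕ) (x : ℝ) :
    HasDerivAt (fun u : ℝ => max u 0 ^ (n+2)) ((n+2) * max x 0 ^ (n+1)) x := by
  rcases lt_trichotomy x 0 with hx | hx | hx
  · have h0 : HasDerivAt (fun _ : ℝ => (0:ℝ)) 0 x := hasDerivAt_const x 0
    have : ((n:ℝ)+2) * max x 0 ^ (n+1) = 0 := by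
      rw [max_eq_right hx.le]; simp
    rw [show ((n:ℕ)+2 : ℝ) * max x 0 ^ (n+1) = ((n:ℝ)+2) * max x 0 ^ (n+1) by push_cast; ring, this]
    apply h0.congr_of_eventuallyEq
    filter_upwards [eventually_lt_nhds hx] with y hy
    rw [max_eq_right hy.le]; simp
  · subst hx
    rw [hasDerivAt_iff_isLittleO]
    simp only [max_self, ne_eq, OfNat.ofNat_ne_zero, not_false_eq_true, zero_pow, sub_zero,
      mul_zero, smul_eq_mul, zero_mul]
    have h1 : (fun y : ℝ => max y 0 ^ (n+2)) =O[nhds 0] fun y => y ^ (n+2) := by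
      apply Asymptotics.IsBigO.of_bound 1
      filter_upwards with y
      simp only [one_mul, Real.norm_eq_abs, abs_pow]
      have hle : |max y 0| ≤ |y| := by
        rw [abs_of_nonneg (le_max_right y 0)]
        exact max_le (le_abs_self y) (abs_nonneg y)
      exact pow_le_pow_left₀ (abs_nonneg _) hle _
    have h2 : (fun y : ℝ => y ^ (n+2)) =o[nhds 0] fun y => y := by
      simpa using Asymptotics.isLittleO_pow_pow (by omega : 1 < n+2) (𝕜 := ℝ)
    simpa using h1.trans_isLittleO h2
  · have h0 : HasDerivAt (fun u : ℝ => u ^ (n+2)) ((n+2) * x ^ (n+1)) x := by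
      simpa using hasDerivAt_pow (n+2) x
    rw [max_eq_left hx.le]
    apply h0.congr_of_eventuallyEq
    filter_upwards [eventually_gt_nhds hx] with y hy
    rw [max_eq_left hy.le]

lemma integral_maxpow (n : ℕ) (a : ℝ) :
    ∫ t in (0:ℝ)..1, max (a - t) 0 ^ (n+1)
      = (max a 0 ^ (n+2) - max (a-1) 0 ^ (n+2)) / (n+2) := by
  rw [intervalIntegral.integral_comp_sub_left (fun u => max u 0 ^ (n+1)) a]
  have key : ∀ u : ℝ, HasDerivAt (fun u : ℝ => max u 0 ^ (n+2) / ((n:ℝ)+2)) (max u 0 ^ (n+1)) u := by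
    intro u
    have h := (hasDerivAt_maxpow n u).div_const ((n:ℝ)+2)
    have h2 : ((n:ℝ)+2) * (max u 0) ^ (n+1) / ((n:ℝ)+2) = max u 0 ^ (n+1) := by
      field_simp
    rwa [h2] at h
  rw [intervalIntegral.integral_eq_sub_of_hasDerivAt (fun u _ => key u)]
  · push_cast
    field_simp
    rw [sub_zero]
  · apply Continuous.intervalIntegrable
    exact (continuous_id.max continuous_const).pow _

open Finset

noncomputable def Fir (n : ℕ) (c : ℝ) : ℝ :=
  (∑ i ∈ Finset.range (n+1), (-1:ℝ)^i * (n.choose i : ℝ) * max (c - i) 0 ^ n) / n.factorial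

lemma Fir_cont (n : ℕ) : Continuous (Fir n) := by
  apply Continuous.div_const
  apply continuous_finset_sum
  intro i _
  exact continuous_const.mul (((continuous_id.sub continuous_const).max continuous_const).pow n)

lemma Fir_one (c : ℝ) : Fir 1 c = max c 0 - max (c-1) 0 := by
  simp [Fir, Finset.sum_range_succ]; ring

lemma sum_id (n : ℕ) (M : ℕ → ℝ) :
    ∑ i ∈ Finset.range (n+2), (-1:ℝ)^i * ((n+1).choose i : ℝ) * (M i - M (i+1))
      = ∑ j ∈ Finset.range (n+3), (-1:ℝ)^j * ((n+2).choose j : ℝ) * M j := by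
  set h : ℕ → ℝ := fun j => (-1:ℝ)^j * ((n+1).choose j : ℝ) * M j with hh
  have e1 : ∑ j ∈ Finset.range (n+3), h j = ∑ i ∈ Finset.range (n+2), h (i+1) + h 0 :=
    Finset.sum_range_succ' h (n+2)
  have e2 : ∑ j ∈ Finset.range (n+3), h j = ∑ j ∈ Finset.range (n+2), h j + h (n+2) :=
    Finset.sum_range_succ h (n+2)
  have hz : h (n+2) = 0 := by simp [hh, Nat.choose_eq_zero_of_lt (Nat.lt_succ_self (n+1))]
  have e3 : ∑ i ∈ Finset.range (n+2), h (i+1) = ∑ j ∈ Finset.range (n+2), h j - h 0 := by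
    rw [e2, hz, add_zero] at e1; linarith
  rw [Finset.sum_range_succ' (fun j => (-1:ℝ)^j * ((n+2).choose j : ℝ) * M j) (n+2)]
  have e4 : ∀ i, (-1:ℝ)^(i+1) * ((n+2).choose (i+1) : ℝ) * M (i+1)
      = -((-1:ℝ)^i * (((n+1)).choose i : ℝ) * M (i+1)) + h (i+1) := by
    intro i
    rw [Nat.choose_succ_succ]
    push_cast
    simp only [hh, pow_succ]
    ring
  rw [Finset.sum_congr rfl (fun i _ => e4 i), Finset.sum_add_distrib, e3]
  have h0 : h 0 = M 0 := by simp [hh]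
  simp only [mul_sub, Finset.sum_sub_distrib, Finset.sum_neg_distrib]
  rw [h0]
  simp only [hh, Nat.choose_zero_right, Nat.cast_one, one_mul]
  ring

lemma key_int2 (n : ℕ) (c : ℝ) :
    ∫ t in (0:ℝ)..1, Fir (n+1) (c - t) = Fir (n+2) c := by
  have hInt : ∀ i ∈ Finset.range (n+1+1), IntervalIntegrable
      (fun t : ℝ => (-1:ℝ)^i * (((n+1)).choose i : ℝ) * max (c - t - i) 0 ^ (n+1))
      volume 0 1 := by
    intro i _
    apply Continuous.intervalIntegrable
    exact continuous_const.mul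
      ((((continuous_const.sub continuous_id).sub continuous_const).max continuous_const).pow _)
  simp only [Fir]
  rw [intervalIntegral.integral_div, intervalIntegral.integral_finset_sum hInt]
  have step : ∀ i ∈ Finset.range (n+1+1),
      (∫ t in (0:ℝ)..1, (-1:ℝ)^i * ((n+1).choose i : ℝ) * max (c - t - i) 0 ^ (n+1))
      = (-1:ℝ)^i * ((n+1).choose i : ℝ) *
          ((max (c - i) 0 ^ (n+2) - max (c - ((i:ℝ)+1)) 0 ^ (n+2)) / ((n:ℝ)+2)) := by
    intro i _
    rw [intervalIntegral.integral_const_mul]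
    congr 1
    have he : (fun t : ℝ => max (c - t - i) 0 ^ (n+1)) = fun t => max ((c - i) - t) 0 ^ (n+1) := by
      funext t; ring_nf
    rw [he, integral_maxpow n (c - i)]
    have : c - (i:ℝ) - 1 = c - ((i:ℝ)+1) := by ring
    rw [this]
  rw [Finset.sum_congr rfl step]
  have hsum := sum_id n (fun j => max (c - j) 0 ^ (n+2))
  have step2 : ∀ i ∈ Finset.range (n+1+1),
      (-1:ℝ)^i * ((n+1).choose i : ℝ) *
          ((max (c - i) 0 ^ (n+2) - max (c - ((i:ℝ)+1)) 0 ^ (n+2)) / ((n:ℝ)+2))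
      = ((-1:ℝ)^i * ((n+1).choose i : ℝ) *
          (max (c - i) 0 ^ (n+2) - max (c - ((i+1:ℕ):ℝ)) 0 ^ (n+2))) / ((n:ℝ)+2) := by
    intro i _
    push_cast
    ring
  rw [Finset.sum_congr rfl step2, ← Finset.sum_div]
  rw [show (n+1+1) = n+2 from rfl] at *
  rw [hsum]
  have hfac : ((n+2).factorial : ℝ) = ((n:ℝ)+2) * ((n+1).factorial : ℝ) := by
    rw [Nat.factorial_succ]
    push_cast
    ring
  rw [hfac]
  have h1 : ((n:ℝ)+2) ≠ 0 := by positivity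
  have h2 : ((n+1).factorial : ℝ) ≠ 0 := by positivity
  field_simp


def Aset (n : ℕ) (c : ℝ) : Set (Fin n → ℝ) := {x | (∀ i, |x i| ≤ 1) ∧ ∑ i, |x i| ≤ c}

lemma isClosed_Aset (n : ℕ) (c : ℝ) : IsClosed (Aset n c) := by
  have h1 : IsClosed {x : Fin n → ℝ | ∑ i, |x i| ≤ c} :=
    isClosed_le (continuous_finset_sum _ (fun i _ => (continuous_apply i).abs)) continuous_const
  have h2 : IsClosed {x : Fin n → ℝ | ∀ i, |x i| ≤ 1} := by
    have : {x : Fin n → ℝ | ∀ i, |x i| ≤ 1} = ⋂ i, {x | |x i| ≤ 1} := by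
      ext x; simp [Set.mem_iInter]
    rw [this]
    exact isClosed_iInter fun i => isClosed_le (continuous_apply i).abs continuous_const
  exact (h2.inter h1 : _)

lemma measurableSet_Aset (n : ℕ) (c : ℝ) : MeasurableSet (Aset n c) :=
  (isClosed_Aset n c).measurableSet

lemma vol_rec (n : ℕ) (c : ℝ) :
    volume (Aset (n+1) c) = ∫⁻ t in Set.Icc (-1:ℝ) 1, volume (Aset n (c - |t|)) := by
  set B : Set (ℝ × (Fin n → ℝ)) :=
    {p | (|p.1| ≤ 1 ∧ ∀ i, |p.2 i| ≤ 1) ∧ |p.1| + ∑ i, |p.2 i| ≤ c} with hB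
  have hBm : MeasurableSet B := by
    have h1 : IsClosed {p : ℝ × (Fin n → ℝ) | |p.1| ≤ 1} :=
      isClosed_le continuous_fst.abs continuous_const
    have h2 : IsClosed {p : ℝ × (Fin n → ℝ) | ∀ i, |p.2 i| ≤ 1} := by
      have : {p : ℝ × (Fin n → ℝ) | ∀ i, |p.2 i| ≤ 1} = ⋂ i, {p | |p.2 i| ≤ 1} := by
        ext p; simp [Set.mem_iInter]
      rw [this]
      exact isClosed_iInter fun i =>
        isClosed_le ((continuous_apply i).comp continuous_snd).abs continuous_const
    have h3 : IsClosed {p : ℝ × (Fin n → ℝ) | |p.1| + ∑ i, |p.2 i| ≤ c} :=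
      isClosed_le (continuous_fst.abs.add
        (continuous_finset_sum _ (fun i _ => ((continuous_apply i).comp continuous_snd).abs)))
        continuous_const
    exact ((h1.inter h2).inter h3).measurableSet
  have mp := MeasureTheory.measurePreserving_piFinSuccAbove
    (fun _ : Fin (n+1) => (volume : Measure ℝ)) 0
  have hpre : (MeasurableEquiv.piFinSuccAbove (fun _ : Fin (n+1) => ℝ) 0) ⁻¹' B
      = Aset (n+1) c := by
    ext x
    simp only [Aset, hB, Set.mem_preimage, Set.mem_setOf_eq,
      MeasurableEquiv.piFinSuccAbove_apply, Fin.insertNthEquiv, Fin.tail]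
    constructor
    · rintro ⟨⟨h0, hs⟩, hsum⟩
      refine ⟨?_, ?_⟩
      · intro i
        rcases Fin.eq_zero_or_eq_succ i with rfl | ⟨j, rfl⟩
        · exact h0
        · simpa [Fin.tail] using hs j
      · rw [Fin.sum_univ_succ] at *
        simpa [Fin.tail] using hsum
    · rintro ⟨hall, hsum⟩
      refine ⟨⟨hall 0, fun j => by simpa [Fin.tail] using hall j.succ⟩, ?_⟩
      rw [Fin.sum_univ_succ] at hsum
      simpa [Fin.tail] using hsum
  have key : volume (Aset (n+1) c)
      = ((volume : Measure ℝ).prod (volume : Measure (Fin n → ℝ))) B := by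
    rw [← hpre]
    rw [MeasureTheory.volume_pi]
    rw [mp.measure_preimage hBm.nullMeasurableSet]
    rw [← MeasureTheory.volume_pi]
  rw [key, MeasureTheory.Measure.prod_apply hBm]
  have slice : ∀ t : ℝ, volume (Prod.mk t ⁻¹' B)
      = Set.indicator (Set.Icc (-1:ℝ) 1) (fun t => volume (Aset n (c - |t|))) t := by
    intro t
    rcases le_or_gt |t| 1 with ht | ht
    · rw [Set.indicator_of_mem (by rw [Set.mem_Icc, ← abs_le]; exact ht)]
      congr 1
      ext y
      simp only [Set.mem_preimage, hB, Set.mem_setOf_eq, Aset]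
      constructor
      · rintro ⟨⟨_, h2⟩, h3⟩
        exact ⟨h2, by linarith⟩
      · rintro ⟨h2, h3⟩
        exact ⟨⟨ht, h2⟩, by linarith⟩
    · rw [Set.indicator_of_notMem (by rw [Set.mem_Icc, ← abs_le]; exact not_le.mpr ht)]
      have hempty : Prod.mk t ⁻¹' B = (∅ : Set (Fin n → ℝ)) := by
        ext y
        simp only [Set.mem_preimage, hB, Set.mem_setOf_eq, Set.mem_empty_iff_false, iff_false]
        rintro ⟨⟨h1, _⟩, _⟩
        exact absurd h1 (not_le.mpr ht)
      rw [hempty, measure_empty]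
  calc ∫⁻ t, volume (Prod.mk t ⁻¹' B)
      = ∫⁻ t, Set.indicator (Set.Icc (-1:ℝ) 1) (fun t => volume (Aset n (c - |t|))) t := by
        exact lintegral_congr slice
    _ = ∫⁻ t in Set.Icc (-1:ℝ) 1, volume (Aset n (c - |t|)) := by
        rw [lintegral_indicator measurableSet_Icc]

lemma Fir_nonneg (n : ℕ) : ∀ c : ℝ, 0 ≤ Fir (n+1) c := by
  induction n with
  | zero =>
    intro c
    rw [Fir_one]
    simp only [sub_nonneg]
    exact max_le_max (by linarith) le_rfl
  | succ n ih =>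
    intro c
    rw [← key_int2 n c]
    apply intervalIntegral.integral_nonneg (by norm_num)
    intro t _
    exact ih _

lemma Aset_zero (c : ℝ) : Aset 0 c = if 0 ≤ c then (Set.univ : Set (Fin 0 → ℝ)) else ∅ := by
  split_ifs with h
  · ext x; simp [Aset, h]
  · ext x; simp [Aset]; linarith

lemma volume_Aset_one (c : ℝ) : volume (Aset 1 c) = ENNReal.ofReal (2 * Fir 1 c) := by
  rw [vol_rec 0 c]
  have hvol : ∀ c' : ℝ, volume (Aset 0 c') = if 0 ≤ c' then 1 else 0 := by
    intro c'
    rw [Aset_zero]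
    split_ifs
    · rw [MeasureTheory.volume_pi, MeasureTheory.Measure.pi_univ]
      simp
    · simp
  calc ∫⁻ t in Set.Icc (-1:ℝ) 1, volume (Aset 0 (c - |t|))
      = ∫⁻ t in Set.Icc (-1:ℝ) 1, Set.indicator {t : ℝ | |t| ≤ c} (fun _ => (1:ℝ≥0∞)) t := by
        apply lintegral_congr
        intro t
        rw [hvol]
        by_cases h : |t| ≤ c
        · rw [if_pos (by linarith), Set.indicator_of_mem (by exact h)]
        · rw [if_neg (by simp only [sub_nonneg]; exact h), Set.indicator_of_notMem (by exact h)]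
    _ = volume ({t : ℝ | |t| ≤ c} ∩ Set.Icc (-1:ℝ) 1) := by
        rw [lintegral_indicator]
        · simp [Measure.restrict_apply]
        · exact measurableSet_le (continuous_abs.measurable) measurable_const
    _ = ENNReal.ofReal (2 * Fir 1 c) := by
        rcases le_or_gt c 0 with hc | hc
        · rcases eq_or_lt_of_le hc with rfl | hc'
          · have : {t : ℝ | |t| ≤ (0:ℝ)} ∩ Set.Icc (-1:ℝ) 1 = {0} := by
              ext t; simp [abs_nonpos_iff]
            rw [this]
            simp [Fir_one]
          · have : {t : ℝ | |t| ≤ c} ∩ Set.Icc (-1:ℝ) 1 = ∅ := by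
              ext t; simp only [Set.mem_inter_iff, Set.mem_setOf_eq, Set.mem_empty_iff_false,
                iff_false, not_and]
              intro h _
              have := abs_nonneg t
              linarith
            rw [this]
            rw [Fir_one, max_eq_right hc, max_eq_right (by linarith)]
            simp
        · have : {t : ℝ | |t| ≤ c} ∩ Set.Icc (-1:ℝ) 1 = Set.Icc (-(min c 1)) (min c 1) := by
            ext t
            simp only [Set.mem_inter_iff, Set.mem_setOf_eq, Set.mem_Icc, abs_le]
            constructor
            · rintro ⟨⟨h1, h2⟩, h3, h4⟩
              exact ⟨by rcases min_cases c 1 with ⟨h,_⟩|⟨h,_⟩ <;> rw [h] <;> linarith,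
                     by rcases min_cases c 1 with ⟨h,_⟩|⟨h,_⟩ <;> rw [h] <;> linarith⟩
            · rintro ⟨h1, h2⟩
              have hm1 : min c 1 ≤ c := min_le_left _ _
              have hm2 : min c 1 ≤ 1 := min_le_right _ _
              exact ⟨⟨by linarith, by linarith⟩, by linarith, by linarith⟩
          rw [this, Real.volume_Icc]
          congr 1
          rw [Fir_one]
          rcases le_or_gt c 1 with h1 | h1
          · rw [min_eq_left h1, max_eq_left hc.le, max_eq_right (by linarith)]
            ring
          · rw [min_eq_right h1.le, max_eq_left hc.le, max_eq_left (by linarith)]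
            ring

lemma volume_Aset (n : ℕ) : ∀ c : ℝ, volume (Aset (n+1) c) = ENNReal.ofReal (2^(n+1) * Fir (n+1) c) := by
  induction n with
  | zero => intro c; rw [volume_Aset_one]; norm_num
  | succ n ih =>
    intro c
    rw [vol_rec (n+1) c]
    have hcongr : ∀ t : ℝ, volume (Aset (n+1) (c - |t|))
        = ENNReal.ofReal (2^(n+1) * Fir (n+1) (c - |t|)) := fun t => ih _
    rw [lintegral_congr hcongr]
    have hg : Continuous (fun t : ℝ => 2^(n+1) * Fir (n+1) (c - t)) := by
      exact continuous_const.mul ((Fir_cont (n+1)).comp (continuous_const.sub continuous_id))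
    have hga : Continuous (fun t : ℝ => 2^(n+1) * Fir (n+1) (c - |t|)) :=
      hg.comp continuous_abs
    rw [← MeasureTheory.ofReal_integral_eq_lintegral_ofReal
      (hga.integrableOn_Icc) (Filter.Eventually.of_forall fun t => by
        exact mul_nonneg (by positivity) (Fir_nonneg n _))]
    congr 1
    rw [MeasureTheory.integral_Icc_eq_integral_Ioc,
      ← intervalIntegral.integral_of_le (by norm_num : (-1:ℝ) ≤ 1)]
    have hi1 : IntervalIntegrable (fun t : ℝ => 2^(n+1) * Fir (n+1) (c - |t|)) volume (-1) 0 :=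
      hga.intervalIntegrable _ _
    have hi2 : IntervalIntegrable (fun t : ℝ => 2^(n+1) * Fir (n+1) (c - |t|)) volume 0 1 :=
      hga.intervalIntegrable _ _
    rw [← intervalIntegral.integral_add_adjacent_intervals hi1 hi2]
    have e1 : ∫ t in (-1:ℝ)..0, 2^(n+1) * Fir (n+1) (c - |t|)
        = ∫ t in (0:ℝ)..1, 2^(n+1) * Fir (n+1) (c - t) := by
      rw [intervalIntegral.integral_congr
        (g := fun t : ℝ => (fun s : ℝ => 2^(n+1) * Fir (n+1) (c - s)) (-t))
        (by
          intro t ht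
          rw [Set.uIcc_of_le (by norm_num : (-1:ℝ) ≤ 0), Set.mem_Icc] at ht
          simp only
          rw [abs_of_nonpos ht.2])]
      rw [intervalIntegral.integral_comp_neg (fun s : ℝ => 2^(n+1) * Fir (n+1) (c - s))]
      norm_num
    have e2 : ∫ t in (0:ℝ)..1, 2^(n+1) * Fir (n+1) (c - |t|)
        = ∫ t in (0:ℝ)..1, 2^(n+1) * Fir (n+1) (c - t) := by
      apply intervalIntegral.integral_congr
      intro t ht
      rw [Set.uIcc_of_le (by norm_num : (0:ℝ) ≤ 1), Set.mem_Icc] at ht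
      simp only
      rw [abs_of_nonneg ht.1]
    rw [e1, e2, intervalIntegral.integral_const_mul, key_int2]
    ring

lemma Fir_eq_target (d : ℕ) (hd : 1 ≤ d) (k : ℝ) (hk1 : 1 ≤ k) (hkd : k ≤ (d:ℝ)) :
    Fir d k = ∑ i ∈ Finset.range (⌊k⌋₊ + 1),
      (-1 : ℝ) ^ i * (k - i) ^ d / (i.factorial * (d - i).factorial) := by
  have hk0 : (0:ℝ) ≤ k := by linarith
  have hfl : ⌊k⌋₊ ≤ d := by
    have := Nat.floor_mono hkd
    rwa [Nat.floor_natCast] at this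
  rw [Fir]
  have hsub : Finset.range (⌊k⌋₊ + 1) ⊆ Finset.range (d + 1) :=
    Finset.range_subset_range.mpr (by omega)
  rw [← Finset.sum_subset hsub (fun i hi hni => ?_)]
  · rw [Finset.sum_div]
    apply Finset.sum_congr rfl
    intro i hi
    rw [Finset.mem_range] at hi
    have hik : (i:ℝ) ≤ k := by
      calc (i:ℝ) ≤ (⌊k⌋₊ : ℝ) := by exact_mod_cast Nat.lt_succ_iff.mp hi
        _ ≤ k := Nat.floor_le hk0
    have hile : i ≤ d := le_trans (Nat.lt_succ_iff.mp hi) hfl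
    rw [max_eq_left (by linarith)]
    rw [Nat.cast_choose ℝ hile]
    have h1 : (i.factorial : ℝ) ≠ 0 := by positivity
    have h2 : ((d - i).factorial : ℝ) ≠ 0 := by positivity
    have h3 : (d.factorial : ℝ) ≠ 0 := by positivity
    field_simp
  · -- vanishing terms
    rw [Finset.mem_range] at hi hni
    have : k < (i:ℝ) := by
      have h1 : k < ⌊k⌋₊ + 1 := Nat.lt_floor_add_one k
      have h2 : (⌊k⌋₊:ℝ) + 1 ≤ (i:ℝ) := by exact_mod_cast not_lt.mp (fun h => hni (by omega))
      linarith
    rw [max_eq_right (by linarith)]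
    rw [zero_pow (by omega)]
    ring

/-- The volume of `ρ*_{d,k}` is `2^d ∑_{i=0}^{⌊k⌋} (-1)^i (k-i)^d / (i!(d-i)!)`. -/
theorem volume_rhoStar (d : ℕ) (hd : 1 ≤ d) (k : ℝ) (hk1 : 1 ≤ k) (hkd : k ≤ d) :
    volume (rhoStar d k) =
      ENNReal.ofReal (2 ^ d * ∑ i ∈ Finset.range (⌊k⌋₊ + 1),
        (-1 : ℝ) ^ i * (k - i) ^ d / (i.factorial * (d - i).factorial)) := by
  have hk0 : (0:ℝ) < k := by linarith
  have hset : rhoStar d k = (MeasurableEquiv.toLp 2 (Fin d → ℝ)).symm ⁻¹' (Aset d k) := by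
    ext x
    simp only [rhoStar, Set.mem_inter_iff, Set.mem_preimage, Aset, Set.mem_setOf_eq, hcube, cross]
    rw [Set.mem_smul_set_iff_inv_smul_mem₀ (ne_of_gt hk0)]
    simp only [Set.mem_setOf_eq, PiLp.smul_apply, smul_eq_mul]
    have hmem : (∑ i, |k⁻¹ * x i| ≤ 1) ↔ ∑ i, |x i| ≤ k := by
      have : ∀ i, |k⁻¹ * x i| = k⁻¹ * |x i| := by
        intro i
        rw [abs_mul, abs_inv, abs_of_pos hk0]
      rw [Finset.sum_congr rfl (fun i _ => this i), ← Finset.mul_sum,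
        inv_mul_eq_div, div_le_one hk0]
    rw [hmem]
    constructor
    · rintro ⟨h1, h2⟩
      exact ⟨h2, h1⟩
    · rintro ⟨h1, h2⟩
      exact ⟨h2, h1⟩
  rw [hset, (EuclideanSpace.volume_preserving_symm_measurableEquiv_toLp (Fin d)).measure_preimage
    (measurableSet_Aset d k).nullMeasurableSet]
  obtain ⟨m, rfl⟩ : ∃ m, d = m + 1 := ⟨d - 1, by omega⟩
  rw [volume_Aset m k]
  congr 1
  rw [Fir_eq_target (m+1) (by omega) k hk1 hkd]
end
end
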